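/- Among the four strategies {no fusion, op fusion only, tensor fusion only, combined op-and-tensor fusion}, the minimum completion time is always attained by either the no-fusion strategy or the combined strategy; that is, min(T_0, T_o, T_t, T_ot) = min(T_0, T_ot). -/

import Mathlib

/-- Among {no fusion, op fusion only, tensor fusion only, combined fusion},
the best completion time is attained by no-fusion or the combined strategy:
`min(T_0, T_o, T_t, T_ot) = min(T_0, T_ot)`. -/
theorem best_strategy_is_none_or_combined
    (P Q a b A B c C : ℝ)
    (hP : 0 ≤ P) (hQ : 0 ≤ Q) (ha : 0 ≤ a) (hb : 0 ≤ b)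
    (hA : 0 ≤ A) (hB : 0 ≤ B)
    (hc₁ : max a b ≤ c) (hc₂ : c ≤ a + b)
    (hC₁ : max A B ≤ C) (hC₂ : C ≤ A + B) :
    min (max (P + a + b) (max (max Q (P + a) + A) (P + a + b) + B))
      (min (max (P + c) (max Q (P + c) + A + B))
        (min (max (P + a + b) (max Q (P + a + b) + C))
          (max (P + c) (max Q (P + c) + C)))) =
    min (max (P + a + b) (max (max Q (P + a) + A) (P + a + b) + B))
      (max (P + c) (max Q (P + c) + C)) := by
  have hpc : P + c ≤ P + a + b := by linarith
  have h1 : max (P + c) (max Q (P + c) + C) ≤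
      max (P + c) (max Q (P + c) + A + B) := by
    apply max_le_max le_rfl
    have := max_le_max (le_refl (max Q (P + c))) hC₂
    linarith [this]
  have h2 : max (P + c) (max Q (P + c) + C) ≤
      max (P + a + b) (max Q (P + a + b) + C) := by
    apply max_le_max hpc
    exact add_le_add_left (max_le_max le_rfl hpc) C
  rw [min_eq_right h2, min_eq_right h1]
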